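/- Let Ω be a set and let S_Ω be the free monoid on Ω, so that unary algebras with the set of unary operations Ω are the same as left S_Ω-acts and free unary algebras are free S_Ω-acts. For every automorphism φ of the category 𝒜_Ω⁰ of finitely generated free S_Ω-acts there exist a permutation π of Ω and, for each object F of 𝒜_Ω⁰, a bijection s_F : F → φ(F) satisfying s_F(f_{i₁}·…·f_{i_k}·a) = π(f_{i₁})·…·π(f_{i_k})·s_F(a) for all generators f_{i₁},…,f_{i_k} ∈ Ω and a ∈ F, such that φ(f) = s_{F'} ∘ f ∘ s_F⁻¹ for every morphism f : F → F' of 𝒜_Ω⁰. -/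

import Mathlib

open CategoryTheory

/-- `f : S × X → S × Y` is a homomorphism of free left `S`-acts, where the action of
`S` on `S × X` is `s • (t, x) = (s * t, x)`. -/
def IsActHom (S : Type) [Monoid S] {X Y : Type} (f : S × X → S × Y) : Prop :=
  ∀ (s : S) (p : S × X), f (s * p.1, p.2) = (s * (f p).1, (f p).2)

/-- Objects of the category `_S𝒜⁰` of finitely generated free left `S`-acts:
the free `S`-act on a finite set `X`, with carrier `S × X`. -/
structure FreeAct (S : Type) [Monoid S] : Type 1 where
  X : Type
  finX : Finite X

/-- The category `_S𝒜⁰`: morphisms are the `S`-equivariant maps. -/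
instance (S : Type) [Monoid S] : Category (FreeAct S) where
  Hom A B := {f : S × A.X → S × B.X // IsActHom S f}
  id A := ⟨fun p => p, fun _ _ => rfl⟩
  comp f g := ⟨fun p => g.1 (f.1 p), fun s p => by
    show g.1 (f.1 (s * p.1, p.2)) = _; rw [f.2 s p]; exact g.2 s (f.1 p)⟩

/-- An automorphism of a category `C`: a functor `C ⥤ C` admitting a functor `ψ` with
`φ ⋙ ψ` and `ψ ⋙ φ` equal (not merely isomorphic) to the identity functor. -/
def IsCatAutomorphism {C : Type*} [Category C] (φ : C ⥤ C) : Prop :=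
  ∃ ψ : C ⥤ C, φ ⋙ ψ = 𝟭 C ∧ ψ ⋙ φ = 𝟭 C

namespace UnaryAux

variable {S : Type} [Monoid S]

/-- The free act of rank one. -/
def G (S : Type) [Monoid S] : FreeAct S := ⟨PUnit, inferInstance⟩

/-- The morphism `G S ⟶ A` sending the generator to `p`. -/
def mor {A : FreeAct S} (p : S × A.X) : G S ⟶ A :=
  ⟨fun q => (q.1 * p.1, p.2), fun s q => by simp [mul_assoc]⟩

lemma comp_val {A B C : FreeAct S} (f : A ⟶ B) (g : B ⟶ C) (p : S × A.X) :
    (f ≫ g).1 p = g.1 (f.1 p) := rfl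

lemma hom_eval' {A : FreeAct S} (h : G S ⟶ A) (q : S × (G S).X) :
    h.1 q = (q.1 * (h.1 (1, PUnit.unit)).1, (h.1 (1, PUnit.unit)).2) := by
  obtain ⟨t, x⟩ := q; cases x
  have := h.2 t (1, PUnit.unit)
  simpa using this

def homEquiv (A : FreeAct S) : (S × A.X) ≃ (G S ⟶ A) where
  toFun := mor
  invFun h := h.1 (1, PUnit.unit)
  left_inv p := by show ((1 : S) * p.1, p.2) = p; rw [one_mul]
  right_inv h := by
    apply Subtype.ext; funext q
    exact (hom_eval' h q).symm

lemma mor_comp {A : FreeAct S} (s : S) (p : S × A.X) :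
    mor ((s, PUnit.unit) : S × (G S).X) ≫ mor p = mor (s * p.1, p.2) := by
  apply Subtype.ext; funext q
  show ((q.1 * s) * p.1, p.2) = (q.1 * (s * p.1), p.2)
  rw [mul_assoc]

lemma mor_one : mor ((1, PUnit.unit) : S × (G S).X) = 𝟙 (G S) := by
  apply Subtype.ext; funext q
  obtain ⟨t, x⟩ := q; cases x
  show (t * 1, PUnit.unit) = (t, PUnit.unit)
  rw [mul_one]

lemma mor_natural {A B : FreeAct S} (f : A ⟶ B) (q : S × A.X) :
    mor q ≫ f = mor (f.1 q) := by
  apply Subtype.ext; funext r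
  show f.1 (r.1 * q.1, q.2) = (r.1 * (f.1 q).1, (f.1 q).2)
  exact f.2 r.1 q

/-- Non-initial objects. -/
def NonInit (A : FreeAct S) : Prop := ∃ (C : FreeAct S) (f g : A ⟶ C), f ≠ g

lemma nonInit_iff (A : FreeAct S) : NonInit A ↔ Nonempty A.X := by
  constructor
  · rintro ⟨C, f, g, hfg⟩
    by_contra hne
    have hE : IsEmpty A.X := not_nonempty_iff.1 hne
    apply hfg
    apply Subtype.ext; funext q
    exact (hE.false q.2).elim
  · rintro ⟨x0⟩
    refine ⟨⟨Bool, inferInstance⟩, ⟨fun q => (q.1, true), fun s p => rfl⟩,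
      ⟨fun q => (q.1, false), fun s p => rfl⟩, fun h => ?_⟩
    have := congrFun (congrArg Subtype.val h) (1, x0)
    simpa using congrArg Prod.snd this

lemma retract_G {B : FreeAct S} (hB : Nonempty B.X) :
    ∃ (f : G S ⟶ B) (g : B ⟶ G S), f ≫ g = 𝟙 (G S) := by
  obtain ⟨y0⟩ := hB
  refine ⟨⟨fun q => (q.1, y0), fun s p => rfl⟩, ⟨fun q => (q.1, PUnit.unit), fun s p => rfl⟩, ?_⟩
  apply Subtype.ext; funext q
  obtain ⟨t, x⟩ := q; cases x
  rfl

lemma subsingleton_of_retract {A : FreeAct S} (f : A ⟶ G S) (g : G S ⟶ A)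
    (h : f ≫ g = 𝟙 A) : Subsingleton A.X := by
  constructor
  intro x y
  have key : ∀ z : A.X, z = (g.1 (1, PUnit.unit)).2 := by
    intro z
    have h1 : g.1 (f.1 (1, z)) = (1, z) := congrFun (congrArg Subtype.val h) (1, z)
    rw [hom_eval' g (f.1 (1, z))] at h1
    exact (congrArg Prod.snd h1).symm
  rw [key x, key y]

lemma map_inj (φ ψ : FreeAct S ⥤ FreeAct S) (h1 : φ ⋙ ψ = 𝟭 (FreeAct S)) {A B : FreeAct S} :
    Function.Injective (φ.map : (A ⟶ B) → (φ.obj A ⟶ φ.obj B)) := by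
  intro f g h
  have hf := Functor.congr_hom h1 f
  have hg := Functor.congr_hom h1 g
  simp only [Functor.comp_map, Functor.id_map] at hf hg
  have : ψ.map (φ.map f) = ψ.map (φ.map g) := by rw [h]
  rw [hf, hg] at this
  have h2 := congrArg (fun k => eqToHom (Functor.congr_obj h1 A).symm ≫ k ≫
    eqToHom (Functor.congr_obj h1 B)) this
  simpa using h2

lemma noninit_map (φ : FreeAct S ⥤ FreeAct S)
    (hinj : ∀ A B : FreeAct S, Function.Injective (φ.map : (A ⟶ B) → (φ.obj A ⟶ φ.obj B)))
    {A : FreeAct S} (h : NonInit A) : NonInit (φ.obj A) := by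
  obtain ⟨C, f, g, hfg⟩ := h
  exact ⟨φ.obj C, φ.map f, φ.map g, fun h => hfg (hinj _ _ h)⟩

/-- A strict automorphism gives an equivalence. -/
def mkEquiv {C : Type*} [Category C] (φ ψ : C ⥤ C) (h1 : φ ⋙ ψ = 𝟭 C) (h2 : ψ ⋙ φ = 𝟭 C) :
    C ≌ C where
  functor := φ
  inverse := ψ
  unitIso := eqToIso h1.symm
  counitIso := eqToIso h2
  functor_unitIso_comp := by
    intro A
    simp [eqToHom_app, eqToHom_map]

section main

variable (φ : FreeAct S ⥤ FreeAct S) (FF : φ.FullyFaithful) (u : G S ≅ φ.obj (G S))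

/-- The bijection chain. -/
def eE (A : FreeAct S) : (S × A.X) ≃ (S × (φ.obj A).X) :=
  ((homEquiv A).trans (FF.homEquiv.trans
    ((⟨fun h => u.hom ≫ h, fun k => u.inv ≫ k, fun h => by simp, fun k => by simp⟩ :
      (φ.obj (G S) ⟶ φ.obj A) ≃ (G S ⟶ φ.obj A)).trans
    (homEquiv (φ.obj A)).symm)))

lemma eE_apply (A : FreeAct S) (p : S × A.X) :
    eE φ FF u A p = (u.hom ≫ φ.map (mor p)).1 (1, PUnit.unit) := rfl

def Tmap (s : S) : G S ⟶ G S :=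
  u.hom ≫ φ.map (mor ((s, PUnit.unit) : S × (G S).X)) ≫ u.inv

def alpha (s : S) : S := ((Tmap φ u s).1 (1, PUnit.unit)).1

lemma Tmap_mul (s t : S) : Tmap φ u (s * t) = Tmap φ u s ≫ Tmap φ u t := by
  have : mor ((s * t, PUnit.unit) : S × (G S).X)
      = mor ((s, PUnit.unit) : S × (G S).X) ≫ mor ((t, PUnit.unit) : S × (G S).X) := by
    rw [mor_comp]
  rw [Tmap, this, φ.map_comp, Tmap, Tmap]
  simp

lemma Tmap_one : Tmap φ u 1 = 𝟙 (G S) := by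
  rw [Tmap, mor_one, φ.map_id]
  simp

lemma alpha_one : alpha φ u 1 = 1 := by
  rw [alpha, Tmap_one]; rfl

lemma alpha_mul (s t : S) : alpha φ u (s * t) = alpha φ u s * alpha φ u t := by
  have h1 : alpha φ u (s * t) = ((Tmap φ u s ≫ Tmap φ u t).1 (1, PUnit.unit)).1 := by
    rw [alpha, Tmap_mul]
  rw [h1, comp_val]
  have h2 : (Tmap φ u s).1 (1, PUnit.unit) = (alpha φ u s, PUnit.unit) := rfl
  rw [h2]
  show ((Tmap φ u t).1 ((alpha φ u s, PUnit.unit) : S × (G S).X)).1 = _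
  rw [hom_eval' (Tmap φ u t) (alpha φ u s, PUnit.unit)]
  rfl

lemma key1 (A : FreeAct S) (s : S) (p : S × A.X) :
    eE φ FF u A (s * p.1, p.2) = (alpha φ u s * (eE φ FF u A p).1, (eE φ FF u A p).2) := by
  rw [eE_apply, eE_apply, ← mor_comp, φ.map_comp]
  have h3 : u.inv.1 ((φ.map (mor ((s, PUnit.unit) : S × (G S).X))).1 (u.hom.1 (1, PUnit.unit)))
      = (alpha φ u s, PUnit.unit) := rfl
  have h4 : u.hom.1 (u.inv.1 ((φ.map (mor ((s, PUnit.unit) : S × (G S).X))).1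
      (u.hom.1 (1, PUnit.unit))))
      = (φ.map (mor ((s, PUnit.unit) : S × (G S).X))).1 (u.hom.1 (1, PUnit.unit)) :=
    congrFun (congrArg Subtype.val u.inv_hom_id) _
  rw [h3] at h4
  show (φ.map (mor p)).1 ((φ.map (mor ((s, PUnit.unit) : S × (G S).X))).1
    (u.hom.1 (1, PUnit.unit))) = _
  rw [← h4]
  exact hom_eval' (u.hom ≫ φ.map (mor p)) (alpha φ u s, PUnit.unit)

lemma key2 {A B : FreeAct S} (f : A ⟶ B) (q : S × A.X) :
    (φ.map f).1 (eE φ FF u A q) = eE φ FF u B (f.1 q) := by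
  rw [eE_apply, eE_apply, ← mor_natural f q, φ.map_comp]
  rfl

/-- `alpha` as an equivalence. -/
def alphaE : S ≃ S :=
  ((Equiv.prodPUnit S).symm.trans ((homEquiv (G S)).trans (FF.homEquiv.trans
    ((⟨fun h => u.hom ≫ h ≫ u.inv, fun h => u.inv ≫ h ≫ u.hom,
        fun h => by simp, fun h => by simp⟩ :
      (φ.obj (G S) ⟶ φ.obj (G S)) ≃ (G S ⟶ G S)).trans
    ((homEquiv (G S)).symm.trans (Equiv.prodPUnit S))))))

lemma alphaE_apply (s : S) : alphaE φ FF u s = alpha φ u s := rfl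

end main

end UnaryAux

namespace UnaryAux

variable {S : Type} [Monoid S]

def uIso (φ : FreeAct S ⥤ FreeAct S) (x0 : (φ.obj (G S)).X)
    (hs : Subsingleton (φ.obj (G S)).X) : G S ≅ φ.obj (G S) where
  hom := ⟨fun q => (q.1, x0), fun s p => rfl⟩
  inv := ⟨fun q => (q.1, PUnit.unit), fun s p => rfl⟩
  hom_inv_id := by
    apply Subtype.ext; funext q; obtain ⟨t, x⟩ := q; cases x; rfl
  inv_hom_id := by
    apply Subtype.ext; funext q
    exact Prod.ext rfl (@Subsingleton.elim _ hs _ _)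

lemma of_eq_mul {Ω : Type} {a b : FreeMonoid Ω} {ω : Ω} (h : FreeMonoid.of ω = a * b) :
    a = 1 ∨ b = 1 := by
  have hl := congrArg (fun x => (FreeMonoid.toList x).length) h
  simp only [FreeMonoid.toList_mul, FreeMonoid.toList_of, List.length_append,
    List.length_singleton] at hl
  rcases Nat.eq_zero_or_pos (FreeMonoid.toList a).length with h0 | h0
  · left
    apply FreeMonoid.toList.injective
    simpa [FreeMonoid.toList_one] using List.length_eq_zero_iff.mp h0
  · right
    apply FreeMonoid.toList.injective
    have hb : (FreeMonoid.toList b).length = 0 := by omega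
    simpa [FreeMonoid.toList_one] using List.length_eq_zero_iff.mp hb

lemma auto_of {Ω : Type} (β : FreeMonoid Ω ≃ FreeMonoid Ω)
    (hmul : ∀ x y, β (x * y) = β x * β y) (hone : β 1 = 1) (ω : Ω) :
    ∃ ω', β (FreeMonoid.of ω) = FreeMonoid.of ω' := by
  have hsymm : ∀ x y, β.symm (x * y) = β.symm x * β.symm y := by
    intro x y
    apply β.injective
    rw [hmul, β.apply_symm_apply, β.apply_symm_apply, β.apply_symm_apply]
  have h1 : β (FreeMonoid.of ω) ≠ 1 := by
    intro h
    have h2 : FreeMonoid.of ω = (1 : FreeMonoid Ω) := by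
      apply β.injective; rw [h, hone]
    exact absurd (congrArg FreeMonoid.toList h2)
      (by simp [FreeMonoid.toList_of, FreeMonoid.toList_one])
  cases hl : FreeMonoid.toList (β (FreeMonoid.of ω)) with
  | nil =>
    exact absurd (FreeMonoid.toList.injective
      (by simp [hl, FreeMonoid.toList_one])) h1
  | cons a t =>
    cases t with
    | nil => exact ⟨a, FreeMonoid.toList.injective (by simp [hl, FreeMonoid.toList_of])⟩
    | cons b t' =>
      have hsplit : β (FreeMonoid.of ω) = FreeMonoid.of a * FreeMonoid.ofList (b :: t') :=
        FreeMonoid.toList.injective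
          (by simp [hl, FreeMonoid.toList_mul, FreeMonoid.toList_of, FreeMonoid.toList_ofList])
      have hiw : FreeMonoid.of ω
          = β.symm (FreeMonoid.of a) * β.symm (FreeMonoid.ofList (b :: t')) := by
        rw [← hsymm, ← hsplit, β.symm_apply_apply]
      rcases of_eq_mul hiw with h | h
      · have h2 : FreeMonoid.of a = (1 : FreeMonoid Ω) := by
          have h3 := congrArg β h; rwa [β.apply_symm_apply, hone] at h3
        exact absurd (congrArg FreeMonoid.toList h2)
          (by simp [FreeMonoid.toList_of, FreeMonoid.toList_one])
      · have h2 : FreeMonoid.ofList (b :: t') = (1 : FreeMonoid Ω) := by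
          have h3 := congrArg β h; rwa [β.apply_symm_apply, hone] at h3
        exact absurd (congrArg FreeMonoid.toList h2)
          (by simp [FreeMonoid.toList_ofList, FreeMonoid.toList_one])

end UnaryAux


open UnaryAux in
/-- **Theorem 8.** Let `S_Ω` be the free monoid on a set `Ω`, so that unary
algebras with set of unary operations `Ω` are the same as left `S_Ω`-acts. For every
automorphism `φ` of the category `𝒜_Ω⁰` of finitely generated free `S_Ω`-acts there exist
a permutation `π` of `Ω` and bijections `s_F : F ≃ φ(F)` with
`s_F (f_{i₁} ⋯ f_{i_k} • a) = π(f_{i₁}) ⋯ π(f_{i_k}) • s_F a` for all generators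
`f_{i₁}, …, f_{i_k} ∈ Ω`, such that `φ(f) = s_{F\'} ∘ f ∘ s_F⁻¹` for every morphism
`f : F ⟶ F\'`. -/
theorem unary_automorphism_description (Ω : Type)
    (φ : FreeAct (FreeMonoid Ω) ⥤ FreeAct (FreeMonoid Ω)) (hφ : IsCatAutomorphism φ) :
    ∃ π : Equiv.Perm Ω,
      ∃ e : ∀ A : FreeAct (FreeMonoid Ω), (FreeMonoid Ω × A.X) ≃ (FreeMonoid Ω × (φ.obj A).X),
        (∀ (A : FreeAct (FreeMonoid Ω)) (l : List Ω) (p : FreeMonoid Ω × A.X),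
            e A ((l.map FreeMonoid.of).prod * p.1, p.2) =
              ((l.map fun ω => FreeMonoid.of (π ω)).prod * (e A p).1, (e A p).2)) ∧
        ∀ {A B : FreeAct (FreeMonoid Ω)} (f : A ⟶ B) (p : FreeMonoid Ω × (φ.obj A).X),
          (φ.map f).1 p = e B (f.1 ((e A).symm p)) := by
  classical
  obtain ⟨ψ, h1, h2⟩ := hφ
  have hinjφ : ∀ {A B : FreeAct (FreeMonoid Ω)},
      Function.Injective (φ.map : (A ⟶ B) → (φ.obj A ⟶ φ.obj B)) :=
    fun {A B} => map_inj φ ψ h1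
  have hinjψ : ∀ {A B : FreeAct (FreeMonoid Ω)},
      Function.Injective (ψ.map : (A ⟶ B) → (ψ.obj A ⟶ ψ.obj B)) :=
    fun {A B} => map_inj ψ φ h2
  have hGnon : NonInit (G (FreeMonoid Ω)) := (nonInit_iff _).2 ⟨PUnit.unit⟩
  have hne : Nonempty (φ.obj (G (FreeMonoid Ω))).X :=
    (nonInit_iff _).1 (noninit_map φ (fun _ _ => hinjφ) hGnon)
  have hCnon : Nonempty (ψ.obj (G (FreeMonoid Ω))).X :=
    (nonInit_iff _).1 (noninit_map ψ (fun _ _ => hinjψ) hGnon)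
  obtain ⟨f0, g0, hret⟩ := retract_G hCnon
  have E : φ.obj (ψ.obj (G (FreeMonoid Ω))) = G (FreeMonoid Ω) := Functor.congr_obj h2 _
  have hsub : Subsingleton (φ.obj (G (FreeMonoid Ω))).X := by
    apply subsingleton_of_retract (φ.map f0 ≫ eqToHom E) (eqToHom E.symm ≫ φ.map g0)
    simp only [Category.assoc, eqToHom_trans_assoc, eqToHom_refl, Category.id_comp]
    rw [← φ.map_comp, hret, φ.map_id]
  let u := uIso φ hne.some hsub
  let FF := (mkEquiv φ ψ h1 h2).fullyFaithfulFunctor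
  let αE := alphaE φ FF u
  have hαmul : ∀ s t, αE (s * t) = αE s * αE t := fun s t => alpha_mul φ u s t
  have hαone : αE 1 = 1 := alpha_one φ u
  choose π0 hπ0 using auto_of αE hαmul hαone
  have hsymmone : αE.symm 1 = 1 := by
    apply αE.injective; rw [αE.apply_symm_apply, hαone]
  have hsymmmul : ∀ x y, αE.symm (x * y) = αE.symm x * αE.symm y := by
    intro x y
    apply αE.injective
    rw [hαmul, αE.apply_symm_apply, αE.apply_symm_apply, αE.apply_symm_apply]
  choose ρ0 hρ0 using auto_of αE.symm hsymmmul hsymmone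
  have hρπ : ∀ ω, ρ0 (π0 ω) = ω := by
    intro ω; apply FreeMonoid.of_injective
    rw [← hρ0, ← hπ0, αE.symm_apply_apply]
  have hπρ : ∀ ω, π0 (ρ0 ω) = ω := by
    intro ω; apply FreeMonoid.of_injective
    rw [← hπ0, ← hρ0, αE.apply_symm_apply]
  refine ⟨⟨π0, ρ0, hρπ, hπρ⟩, fun A => eE φ FF u A, ?_, ?_⟩
  · intro A l p
    have hprod : alpha φ u ((l.map FreeMonoid.of).prod)
        = (l.map fun ω => FreeMonoid.of (π0 ω)).prod := by
      show αE ((l.map FreeMonoid.of).prod) = _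
      induction l with
      | nil => simpa using hαone
      | cons a t ih => simp only [List.map_cons, List.prod_cons, hαmul, hπ0, ih]
    rw [key1 φ FF u A ((l.map FreeMonoid.of).prod) p, hprod]
    rfl
  · intro A B f p
    conv_lhs => rw [← Equiv.apply_symm_apply (eE φ FF u A) p]
    exact key2 φ FF u f ((eE φ FF u A).symm p)
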